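/- Under the same assumptions, if additionally the directed graph induced by W (with an edge from j to i when Wᵢⱼ > 0) is strongly connected and Wⱼⱼ > 0 for all j, then ‖J(x)‖_π = ‖x‖_π holds if and only if there exists ζ ∈ ℝ^d such that xⱼ = πⱼ ζ for all 1 ≤ j ≤ n. -/

import Mathlib

lemma variance_id {E : Type*} [NormedAddCommGroup E] [InnerProductSpace ℝ E]
    {ι : Type*} (s : Finset ι) (a : ι → ℝ) (y : ι → E) (ha : ∑ i ∈ s, a i = 1) :
    ∑ i ∈ s, a i * ‖y i - ∑ j ∈ s, a j • y j‖^2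
      = (∑ i ∈ s, a i * ‖y i‖^2) - ‖∑ j ∈ s, a j • y j‖^2 := by
  set m := ∑ j ∈ s, a j • y j with hm
  have h1 : ∀ i, ‖y i - m‖^2 = ‖y i‖^2 - 2 * inner ℝ (y i) m + ‖m‖^2 := by
    intro i; rw [@norm_sub_sq_real]
  have h2 : ∑ i ∈ s, a i * inner ℝ (y i) m = (‖m‖^2 : ℝ) := by
    rw [← real_inner_self_eq_norm_sq, hm]
    rw [sum_inner]
    congr 1; ext i
    rw [real_inner_smul_left]
  calc ∑ i ∈ s, a i * ‖y i - m‖^2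
      = ∑ i ∈ s, (a i * ‖y i‖^2 - 2 * (a i * inner ℝ (y i) m) + a i * ‖m‖^2) := by
        congr 1; ext i; rw [h1]; ring
    _ = (∑ i ∈ s, a i * ‖y i‖^2) - 2 * (∑ i ∈ s, a i * inner ℝ (y i) m)
          + (∑ i ∈ s, a i) * ‖m‖^2 := by
        rw [Finset.sum_add_distrib, Finset.sum_sub_distrib, ← Finset.mul_sum, ← Finset.sum_mul]
    _ = (∑ i ∈ s, a i * ‖y i‖^2) - ‖m‖^2 := by rw [h2, ha]; ring

theorem stmt_5 {n d : ℕ} (W : Matrix (Fin n) (Fin n) ℝ) (π : Fin n → ℝ)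
    (hW_nonneg : ∀ i j, 0 ≤ W i j)
    (hW_col : ∀ j, ∑ k, W k j = 1)
    (hW_diag : ∀ j, 0 < W j j)
    (hW_conn : ∀ i j : Fin n, Relation.ReflTransGen (fun a b => 0 < W b a) i j)
    (hπ_pos : ∀ j, 0 < π j)
    (hπ_sum : ∑ j, π j = 1)
    (hπ_eig : ∀ k, ∑ j, W k j * π j = π k) :
    ∀ x : Fin n → EuclideanSpace ℝ (Fin d),
      (Real.sqrt (∑ k, (1 / π k) * ‖∑ j, W k j • x j‖ ^ 2) =
          Real.sqrt (∑ j, (1 / π j) * ‖x j‖ ^ 2) ↔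
        ∃ ζ : EuclideanSpace ℝ (Fin d), ∀ j, x j = π j • ζ) := by
  intro x
  have hπne : ∀ j, π j ≠ 0 := fun j => (hπ_pos j).ne'
  have hsmul : ∀ (k : Fin n) (v : EuclideanSpace ℝ (Fin d)),
      (1 / π k) * ‖π k • v‖^2 = π k * ‖v‖^2 := by
    intro k v
    rw [norm_smul, Real.norm_eq_abs, abs_of_pos (hπ_pos k), mul_pow]
    field_simp [hπne k]
  constructor
  · intro h
    set y : Fin n → EuclideanSpace ℝ (Fin d) := fun j => (π j)⁻¹ • x j with hy
    have hxy : ∀ j, x j = π j • y j := by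
      intro j; rw [hy]; simp [smul_smul, mul_inv_cancel₀ (hπne j)]
    set a : Fin n → Fin n → ℝ := fun k j => W k j * π j / π k with ha
    have hka : ∀ k j, π k * a k j = W k j * π j := by
      intro k j; rw [ha]; simp only
      rw [mul_comm]; exact div_mul_cancel₀ _ (hπne k)
    have ha_sum : ∀ k, ∑ j, a k j = 1 := by
      intro k
      rw [ha]; simp only
      rw [← Finset.sum_div, hπ_eig k, div_self (hπne k)]
    set m : Fin n → EuclideanSpace ℝ (Fin d) := fun k => ∑ j, a k j • y j with hmdef
    have hJm : ∀ k, ∑ j, W k j • x j = π k • m k := by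
      intro k
      rw [hmdef]
      simp only [Finset.smul_sum, smul_smul, hka]
      congr 1; ext j
      rw [hxy j, smul_smul]
    have hL_nonneg : (0:ℝ) ≤ ∑ k, (1 / π k) * ‖∑ j, W k j • x j‖ ^ 2 :=
      Finset.sum_nonneg fun k _ =>
        mul_nonneg (div_nonneg zero_le_one (hπ_pos k).le) (sq_nonneg _)
    have hR_nonneg : (0:ℝ) ≤ ∑ j, (1 / π j) * ‖x j‖ ^ 2 :=
      Finset.sum_nonneg fun j _ =>
        mul_nonneg (div_nonneg zero_le_one (hπ_pos j).le) (sq_nonneg _)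
    have hsum : ∑ k, (1 / π k) * ‖∑ j, W k j • x j‖ ^ 2
        = ∑ j, (1 / π j) * ‖x j‖ ^ 2 :=
      (Real.sqrt_inj hL_nonneg hR_nonneg).mp h
    have hRx : ∀ j, (1 / π j) * ‖x j‖^2 = π j * ‖y j‖^2 := by
      intro j; rw [hxy j, hsmul]
    have hgap : ∑ k, ∑ j, (W k j * π j) * ‖y j - m k‖^2
        = (∑ j, (1 / π j) * ‖x j‖ ^ 2) - ∑ k, (1 / π k) * ‖∑ j, W k j • x j‖ ^ 2 := by
      have hterm : ∀ k, ∑ j, (W k j * π j) * ‖y j - m k‖^2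
          = π k * ∑ j, a k j * ‖y j - m k‖^2 := by
        intro k
        rw [Finset.mul_sum]
        congr 1; ext j
        rw [← hka k j]; ring
      calc ∑ k, ∑ j, (W k j * π j) * ‖y j - m k‖^2
          = ∑ k, π k * ((∑ j, a k j * ‖y j‖^2) - ‖m k‖^2) := by
            congr 1; ext k
            rw [hterm k, variance_id Finset.univ (a k) y (ha_sum k)]
        _ = (∑ k, ∑ j, (π k * a k j) * ‖y j‖^2) - ∑ k, π k * ‖m k‖^2 := by
            rw [← Finset.sum_sub_distrib]
            congr 1; ext k
            rw [mul_sub, Finset.mul_sum]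
            congr 1
            · congr 1; ext j; ring
        _ = (∑ j, (1 / π j) * ‖x j‖ ^ 2) - ∑ k, (1 / π k) * ‖∑ j, W k j • x j‖ ^ 2 := by
            congr 1
            · rw [Finset.sum_comm]
              congr 1; ext j
              have hpt : ∀ k, (π k * a k j) * ‖y j‖^2 = W k j * (π j * ‖y j‖^2) := by
                intro k; rw [hka]; ring
              rw [Finset.sum_congr rfl (fun k _ => hpt k), ← Finset.sum_mul, hW_col j,
                one_mul, hRx j]
            · congr 1; ext k
              rw [hJm k, hsmul]
    have hgap0 : ∑ k, ∑ j, (W k j * π j) * ‖y j - m k‖^2 = 0 := by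
      rw [hgap, hsum]; ring
    have hterm0 : ∀ k j, (W k j * π j) * ‖y j - m k‖^2 = 0 := by
      intro k j
      have h1 : ∀ k ∈ Finset.univ, (0:ℝ) ≤ ∑ j, (W k j * π j) * ‖y j - m k‖^2 :=
        fun k _ => Finset.sum_nonneg fun j _ =>
          mul_nonneg (mul_nonneg (hW_nonneg k j) (hπ_pos j).le) (sq_nonneg _)
      have h2 := (Finset.sum_eq_zero_iff_of_nonneg h1).mp hgap0 k (Finset.mem_univ k)
      have h3 : ∀ j ∈ Finset.univ, (0:ℝ) ≤ (W k j * π j) * ‖y j - m k‖^2 :=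
        fun j _ => mul_nonneg (mul_nonneg (hW_nonneg k j) (hπ_pos j).le) (sq_nonneg _)
      exact (Finset.sum_eq_zero_iff_of_nonneg h3).mp h2 j (Finset.mem_univ j)
    have hym : ∀ k j, 0 < W k j → y j = m k := by
      intro k j hW
      have hpos : (0:ℝ) < W k j * π j := mul_pos hW (hπ_pos j)
      have h4 : ‖y j - m k‖^2 = 0 := by
        rcases mul_eq_zero.mp (hterm0 k j) with h' | h'
        · exact absurd h' hpos.ne'
        · exact h'
      have h5 : ‖y j - m k‖ = 0 := by
        nlinarith [norm_nonneg (y j - m k)]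
      rw [norm_eq_zero, sub_eq_zero] at h5
      exact h5
    have hedge : ∀ k j, 0 < W k j → y j = y k := by
      intro k j hW
      rw [hym k j hW, ← hym k k (hW_diag k)]
    have hconst : ∀ i j : Fin n, y i = y j := by
      intro i j
      induction hW_conn i j with
      | refl => rfl
      | tail _ hstep ih => rw [ih]; exact hedge _ _ hstep
    rcases Nat.eq_zero_or_pos n with hn | hn
    · subst hn
      exact ⟨0, fun j => absurd j.2 (by omega)⟩
    · obtain ⟨i0⟩ : Nonempty (Fin n) := ⟨⟨0, hn⟩⟩
      refine ⟨y i0, fun j => ?_⟩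
      rw [hxy j, hconst j i0]
  · rintro ⟨ζ, hζ⟩
    have hL : ∀ k, ∑ j, W k j • x j = π k • ζ := by
      intro k
      have hpt : ∀ j, W k j • x j = (W k j * π j) • ζ := by
        intro j; rw [hζ j, smul_smul]
      rw [Finset.sum_congr rfl (fun j _ => hpt j), ← Finset.sum_smul, hπ_eig k]
    have e1 : ∑ k, (1 / π k) * ‖∑ j, W k j • x j‖ ^ 2 = ‖ζ‖^2 := by
      have hpt : ∀ k, (1 / π k) * ‖∑ j, W k j • x j‖ ^ 2 = π k * ‖ζ‖^2 := by
        intro k; rw [hL k, hsmul]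
      rw [Finset.sum_congr rfl (fun k _ => hpt k), ← Finset.sum_mul, hπ_sum, one_mul]
    have e2 : ∑ j, (1 / π j) * ‖x j‖ ^ 2 = ‖ζ‖^2 := by
      have hpt : ∀ j, (1 / π j) * ‖x j‖ ^ 2 = π j * ‖ζ‖^2 := by
        intro j; rw [hζ j, hsmul]
      rw [Finset.sum_congr rfl (fun j _ => hpt j), ← Finset.sum_mul, hπ_sum, one_mul]
    rw [e1, e2]
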